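/- arXiv:1204.4420 — 2 statements merged into one kernel-verified Lean document; each statement's English description precedes it below -/
import Mathlib

section
/- (Proposition 1) Fix a rational α₁ = p/q ∈ (0,1) and set α₂ = 1 − α₁. For each N divisible by q let N₁ = α₁N, N₂ = α₂N and let p_N = (1/N)·log Z_N be the pressure of the bipartite mean-field model. Then lim_{k→∞} p_{kq} = log 2 + max_{(μ₁,μ₂) ∈ [−1,1]²} f(μ₁,μ₂). -/
open Finset Filter

/-- The entropy function 𝓘(x) = ((1+x)log(1+x) + (1-x)log(1-x))/2.
Note `Real.log 0 = 0` in Mathlib, which implements the convention 0·log 0 = 0. -/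
noncomputable def entI (x : ℝ) : ℝ :=
  ((1 + x) * Real.log (1 + x) + (1 - x) * Real.log (1 - x)) / 2

/-- The value of a spin encoded by a Boolean. -/
noncomputable def spin (b : Bool) : ℝ := if b then 1 else -1

/-- The Hamiltonian density g(μ₁,μ₂). -/
noncomputable def gBip (J11 J12 J22 h1 h2 a1 a2 μ1 μ2 : ℝ) : ℝ :=
  (1 / 2) * (a1 ^ 2 * J11 * μ1 ^ 2 + 2 * a1 * a2 * J12 * μ1 * μ2 + a2 ^ 2 * J22 * μ2 ^ 2)
    + a1 * h1 * μ1 + a2 * h2 * μ2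

/-- The pressure functional f(μ₁,μ₂) = β g(μ₁,μ₂) − α₁𝓘(μ₁) − α₂𝓘(μ₂). -/
noncomputable def fBip (β J11 J12 J22 h1 h2 a1 a2 μ1 μ2 : ℝ) : ℝ :=
  β * gBip J11 J12 J22 h1 h2 a1 a2 μ1 μ2 - a1 * entI μ1 - a2 * entI μ2

/-- Magnetization of the first block (the first N₁ spins). -/
noncomputable def mag1 (N1 N2 : ℕ) (σ : Fin (N1 + N2) → Bool) : ℝ :=
  (1 / (N1 : ℝ)) * ∑ i : Fin (N1 + N2), if (i : ℕ) < N1 then spin (σ i) else 0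

/-- Magnetization of the second block (the last N₂ spins). -/
noncomputable def mag2 (N1 N2 : ℕ) (σ : Fin (N1 + N2) → Bool) : ℝ :=
  (1 / (N2 : ℝ)) * ∑ i : Fin (N1 + N2), if N1 ≤ (i : ℕ) then spin (σ i) else 0

/-- The partition function of the bipartite mean-field model. -/
noncomputable def Zbip (β J11 J12 J22 h1 h2 : ℝ) (N1 N2 : ℕ) : ℝ :=
  ∑ σ : Fin (N1 + N2) → Bool,
    Real.exp (β * ((N1 : ℝ) + N2) *
      gBip J11 J12 J22 h1 h2 ((N1 : ℝ) / ((N1 : ℝ) + N2)) ((N2 : ℝ) / ((N1 : ℝ) + N2))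
        (mag1 N1 N2 σ) (mag2 N1 N2 σ))


lemma card_count (n c : ℕ) :
    (univ.filter fun τ : Fin n → Bool => (univ.filter fun i => τ i = true).card = c).card
      = n.choose c := by
  have h : n.choose c = ((univ : Finset (Fin n)).powersetCard c).card := by
    rw [Finset.card_powersetCard, Finset.card_univ, Fintype.card_fin]
  rw [h]
  refine Finset.card_bij' (fun τ _ => univ.filter fun i => τ i = true)
    (fun A _ => fun i => decide (i ∈ A)) ?_ ?_ ?_ ?_
  · intro τ hτ
    simp only [Finset.mem_filter, Finset.mem_univ, true_and] at hτ
    simp [Finset.mem_powersetCard, hτ]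
  · intro A hA
    simp only [Finset.mem_powersetCard] at hA
    simp only [Finset.mem_filter, Finset.mem_univ, true_and]
    rw [show (univ.filter fun i => decide (i ∈ A) = true) = A by ext i; simp]
    exact hA.2
  · intro τ hτ
    funext i
    simp
  · intro A hA
    ext i
    simp

lemma sum_spin (n : ℕ) (τ : Fin n → Bool) :
    ∑ i, spin (τ i) = 2 * ((univ.filter fun i => τ i = true).card : ℝ) - n := by
  have : ∀ i, spin (τ i) = 2 * (if τ i = true then (1:ℝ) else 0) - 1 := by
    intro i; unfold spin; cases τ i <;> norm_num
  rw [Finset.sum_congr rfl fun i _ => this i, Finset.sum_sub_distrib, ← Finset.mul_sum,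
    Finset.sum_boole]
  simp

lemma sum_bool_count (n : ℕ) (G : ℝ → ℝ) :
    ∑ τ : Fin n → Bool, G (∑ i, spin (τ i))
      = ∑ c ∈ Finset.range (n + 1), (n.choose c : ℝ) * G (2 * c - n) := by
  rw [← Finset.sum_fiberwise_of_maps_to
    (g := fun τ : Fin n → Bool => (univ.filter fun i => τ i = true).card)
    (t := Finset.range (n + 1))]
  · refine Finset.sum_congr rfl fun c _ => ?_
    rw [Finset.sum_congr rfl (fun τ hτ => ?_), Finset.sum_const, card_count,
      nsmul_eq_mul]
    simp only [Finset.mem_filter, Finset.mem_univ, true_and] at hτ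
    rw [sum_spin, hτ]
  · intro τ _
    simp only [Finset.mem_range, Nat.lt_succ_iff]
    exact le_trans (Finset.card_filter_le _ _) (by simp)

/-- The equivalence splitting a configuration into its two blocks. -/
def blockEquiv (N1 N2 : ℕ) : ((Fin N1 → Bool) × (Fin N2 → Bool)) ≃ (Fin (N1 + N2) → Bool) where
  toFun ττ := Fin.append ττ.1 ττ.2
  invFun σ := (fun i => σ (Fin.castAdd N2 i), fun j => σ (Fin.natAdd N1 j))
  left_inv ττ := by
    ext i
    · simp [Fin.append_left]
    · simp [Fin.append_right]
  right_inv σ := by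
    funext i
    induction i using Fin.addCases with
    | left i => simp [Fin.append_left]
    | right j => simp [Fin.append_right]

lemma mag1_append (N1 N2 : ℕ) (τ1 : Fin N1 → Bool) (τ2 : Fin N2 → Bool) :
    mag1 N1 N2 (Fin.append τ1 τ2) = (1 / (N1 : ℝ)) * ∑ i, spin (τ1 i) := by
  unfold mag1
  congr 1
  rw [Fin.sum_univ_add]
  have h2 : ∀ j : Fin N2, (if ((Fin.natAdd N1 j : Fin (N1+N2)) : ℕ) < N1 then
      spin (Fin.append τ1 τ2 (Fin.natAdd N1 j)) else 0) = 0 := by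
    intro j; simp
  rw [Finset.sum_congr rfl fun j _ => h2 j]
  simp [Fin.append_left]

lemma mag2_append (N1 N2 : ℕ) (τ1 : Fin N1 → Bool) (τ2 : Fin N2 → Bool) :
    mag2 N1 N2 (Fin.append τ1 τ2) = (1 / (N2 : ℝ)) * ∑ j, spin (τ2 j) := by
  unfold mag2
  congr 1
  rw [Fin.sum_univ_add]
  have h1 : ∀ i : Fin N1, (if N1 ≤ ((Fin.castAdd N2 i : Fin (N1+N2)) : ℕ) then
      spin (Fin.append τ1 τ2 (Fin.castAdd N2 i)) else 0) = 0 := by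
    intro i; simp [Nat.not_le.mpr i.isLt]
  rw [Finset.sum_congr rfl fun i _ => h1 i]
  simp [Fin.append_right]

noncomputable def μgrid (n c : ℕ) : ℝ := (2 * c - n) / n

lemma Zbip_eq (β J11 J12 J22 h1 h2 : ℝ) (N1 N2 : ℕ) :
    Zbip β J11 J12 J22 h1 h2 N1 N2 =
      ∑ c1 ∈ Finset.range (N1 + 1), ∑ c2 ∈ Finset.range (N2 + 1),
        (N1.choose c1 : ℝ) * (N2.choose c2 : ℝ) *
          Real.exp (β * ((N1 : ℝ) + N2) *
            gBip J11 J12 J22 h1 h2 ((N1 : ℝ) / ((N1 : ℝ) + N2)) ((N2 : ℝ) / ((N1 : ℝ) + N2))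
              (μgrid N1 c1) (μgrid N2 c2)) := by
  unfold Zbip
  have hsum := Fintype.sum_equiv (blockEquiv N1 N2)
    (fun ττ : (Fin N1 → Bool) × (Fin N2 → Bool) =>
      Real.exp (β * ((N1 : ℝ) + N2) *
        gBip J11 J12 J22 h1 h2 ((N1 : ℝ) / ((N1 : ℝ) + N2)) ((N2 : ℝ) / ((N1 : ℝ) + N2))
          ((1 / (N1 : ℝ)) * ∑ i, spin (ττ.1 i)) ((1 / (N2 : ℝ)) * ∑ j, spin (ττ.2 j))))
    (fun σ =>
      Real.exp (β * ((N1 : ℝ) + N2) *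
        gBip J11 J12 J22 h1 h2 ((N1 : ℝ) / ((N1 : ℝ) + N2)) ((N2 : ℝ) / ((N1 : ℝ) + N2))
          (mag1 N1 N2 σ) (mag2 N1 N2 σ)))
    (fun ττ => by simp only [show blockEquiv N1 N2 ττ = Fin.append ττ.1 ττ.2 from rfl,
      mag1_append, mag2_append])
  rw [← hsum]
  rw [Fintype.sum_prod_type]
  rw [sum_bool_count N1 (fun s => ∑ τ2 : Fin N2 → Bool,
    Real.exp (β * ((N1 : ℝ) + N2) *
      gBip J11 J12 J22 h1 h2 ((N1 : ℝ) / ((N1 : ℝ) + N2)) ((N2 : ℝ) / ((N1 : ℝ) + N2))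
        ((1 / (N1 : ℝ)) * s) ((1 / (N2 : ℝ)) * ∑ j, spin (τ2 j))))]
  refine Finset.sum_congr rfl fun c1 _ => ?_
  rw [sum_bool_count N2 (fun s =>
    Real.exp (β * ((N1 : ℝ) + N2) *
      gBip J11 J12 J22 h1 h2 ((N1 : ℝ) / ((N1 : ℝ) + N2)) ((N2 : ℝ) / ((N1 : ℝ) + N2))
        ((1 / (N1 : ℝ)) * (2 * c1 - N1)) ((1 / (N2 : ℝ)) * s))), Finset.mul_sum]
  refine Finset.sum_congr rfl fun c2 _ => ?_
  simp only [μgrid, one_div_mul_eq_div, mul_assoc]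


lemma max_term (n c : ℕ) (h0 : 0 < c) (hn : c < n) (k : ℕ) (hk : k ≤ n) :
    (n.choose k : ℝ) * ((c : ℝ) / n) ^ k * (((n : ℝ) - c) / n) ^ (n - k)
      ≤ (n.choose c : ℝ) * ((c : ℝ) / n) ^ c * (((n : ℝ) - c) / n) ^ (n - c) := by
  have hn0 : (0 : ℝ) < n := by exact_mod_cast h0.trans hn
  have hcn : (c : ℝ) ≤ n := by exact_mod_cast hn.le
  have hc0 : (0 : ℝ) < c := by exact_mod_cast h0
  have hcn' : (c : ℝ) < n := by exact_mod_cast hn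
  set x : ℝ := (c : ℝ) / n with hxdef
  set y : ℝ := ((n : ℝ) - c) / n with hydef
  have hx : 0 < x := by positivity
  have hy : 0 < y := div_pos (sub_pos.mpr hcn') hn0
  set t : ℕ → ℝ := fun k => (n.choose k : ℝ) * x ^ k * y ^ (n - k) with ht
  have htnn : ∀ k, 0 ≤ t k := fun k =>
    mul_nonneg (mul_nonneg (Nat.cast_nonneg _) (pow_nonneg hx.le _)) (pow_nonneg hy.le _)
  have hrec : ∀ k, k < n → t (k + 1) * (((k : ℝ) + 1) * y) = t k * (((n : ℝ) - k) * x) := by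
    intro k hkn
    have hch : ((n.choose (k + 1)) * (k + 1) : ℕ) = (n.choose k) * (n - k) :=
      Nat.choose_succ_right_eq n k
    have hch' : ((n.choose (k + 1)) : ℝ) * ((k : ℝ) + 1) = (n.choose k : ℝ) * ((n : ℝ) - k) := by
      have := congrArg (fun m : ℕ => (m : ℝ)) hch
      push_cast [Nat.cast_sub hkn.le] at this
      convert this using 2 <;> push_cast <;> ring
    have he : n - k = (n - (k + 1)) + 1 := by omega
    rw [ht]
    simp only []
    rw [he, pow_succ]
    linear_combination (x ^ k * x * y ^ (n - (k + 1)) * y) * hch'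
  have hup : ∀ k, k < c → t k ≤ t (k + 1) := by
    intro k hkc
    have hkn : k < n := lt_trans hkc hn
    have hkc' : (k : ℝ) + 1 ≤ c := by exact_mod_cast hkc
    have hkn' : (k : ℝ) < n := by exact_mod_cast hkn
    have hineq : ((k : ℝ) + 1) * y ≤ ((n : ℝ) - k) * x := by
      rw [hxdef, hydef, mul_div_assoc', mul_div_assoc']
      apply (div_le_div_iff_of_pos_right hn0).mpr
      nlinarith [mul_nonneg (sub_nonneg.mpr hkc') hn0.le]
    have hpos : 0 < ((k : ℝ) + 1) * y := by positivity
    have h2 : t k * (((k : ℝ) + 1) * y) ≤ t (k + 1) * (((k : ℝ) + 1) * y) := by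
      rw [hrec k hkn]
      exact mul_le_mul_of_nonneg_left hineq (htnn k)
    exact le_of_mul_le_mul_right h2 hpos
  have hdown : ∀ k, c ≤ k → k < n → t (k + 1) ≤ t k := by
    intro k hck hkn
    have hck' : (c : ℝ) ≤ k := by exact_mod_cast hck
    have hineq : ((n : ℝ) - k) * x ≤ ((k : ℝ) + 1) * y := by
      rw [hxdef, hydef, mul_div_assoc', mul_div_assoc']
      apply (div_le_div_iff_of_pos_right hn0).mpr
      nlinarith [mul_nonneg hn0.le (sub_nonneg.mpr hck')]
    have hpos : 0 < ((k : ℝ) + 1) * y := by positivity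
    have h2 : t (k + 1) * (((k : ℝ) + 1) * y) ≤ t k * (((k : ℝ) + 1) * y) := by
      rw [hrec k hkn]
      exact mul_le_mul_of_nonneg_left hineq (htnn k)
    exact le_of_mul_le_mul_right h2 hpos
  have hA : ∀ j, j ≤ c → t (c - j) ≤ t c := by
    intro j
    induction j with
    | zero => simp
    | succ j ih =>
      intro hj
      have h1 : c - (j + 1) < c := by omega
      calc t (c - (j + 1)) ≤ t (c - (j + 1) + 1) := hup _ h1
        _ = t (c - j) := by congr 1; omega
        _ ≤ t c := ih (by omega)
  have hB : ∀ j, c + j ≤ n → t (c + j) ≤ t c := by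
    intro j
    induction j with
    | zero => simp
    | succ j ih =>
      intro hj
      calc t (c + (j + 1)) = t ((c + j) + 1) := rfl
        _ ≤ t (c + j) := hdown (c + j) (Nat.le_add_right c j) (by omega)
        _ ≤ t c := ih (by omega)
  rcases le_total k c with h | h
  · have := hA (c - k) (by omega)
    rwa [show c - (c - k) = k by omega] at this
  · have := hB (k - c) (by omega)
    rwa [show c + (k - c) = k by omega] at this

lemma log_nat_succ_nonneg (m : ℕ) : (0:ℝ) ≤ Real.log ((m : ℝ) + 1) :=
  Real.log_nonneg (by linarith [Nat.cast_nonneg (α := ℝ) m])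

lemma choose_log_le (n c : ℕ) (hc : c ≤ n) :
    Real.log (n.choose c) ≤
      (n : ℝ) * Real.log n - c * Real.log c - ((n : ℝ) - c) * Real.log ((n : ℝ) - c) := by
  rcases Nat.eq_zero_or_pos c with h0 | h0
  · subst h0; simp
  rcases eq_or_lt_of_le hc with he | hlt
  · subst he
    simp [Nat.choose_self, Real.log_one]
  have hn0 : (0 : ℝ) < n := by exact_mod_cast h0.trans hlt
  have hc0 : (0 : ℝ) < c := by exact_mod_cast h0
  have hcn : (c : ℝ) < n := by exact_mod_cast hlt
  set x : ℝ := (c : ℝ) / n with hxdef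
  set y : ℝ := ((n : ℝ) - c) / n with hydef
  have hx : 0 < x := by positivity
  have hy : 0 < y := div_pos (sub_pos.mpr hcn) hn0
  have hxy : x + y = 1 := by rw [hxdef, hydef]; field_simp; ring
  have key : (n.choose c : ℝ) * x ^ c * y ^ (n - c) ≤ 1 := by
    calc (n.choose c : ℝ) * x ^ c * y ^ (n - c)
        = x ^ c * y ^ (n - c) * (n.choose c : ℝ) := by ring
      _ ≤ ∑ k ∈ Finset.range (n + 1), x ^ k * y ^ (n - k) * (n.choose k : ℝ) := by
          apply Finset.single_le_sum (f := fun k => x ^ k * y ^ (n - k) * (n.choose k : ℝ))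
          · intro k _
            positivity
          · simp [Nat.lt_succ_iff, hc]
      _ = (x + y) ^ n := (add_pow x y n).symm
      _ = 1 := by rw [hxy]; simp
  have hchpos : (0 : ℝ) < (n.choose c : ℝ) := by exact_mod_cast Nat.choose_pos hc
  have hlog := Real.log_le_log (by positivity) key
  rw [Real.log_one, Real.log_mul (by positivity) (by positivity),
    Real.log_mul hchpos.ne' (by positivity), Real.log_pow, Real.log_pow,
    hxdef, hydef, Real.log_div hc0.ne' hn0.ne', Real.log_div (sub_pos.mpr hcn).ne' hn0.ne']
    at hlog
  have hcast : ((n - c : ℕ) : ℝ) = (n : ℝ) - c := Nat.cast_sub hc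
  rw [hcast] at hlog
  nlinarith [hlog]

lemma choose_log_ge (n c : ℕ) (hc : c ≤ n) :
    (n : ℝ) * Real.log n - c * Real.log c - ((n : ℝ) - c) * Real.log ((n : ℝ) - c)
        - Real.log (n + 1)
      ≤ Real.log (n.choose c) := by
  rcases Nat.eq_zero_or_pos c with h0 | h0
  · subst h0
    simp only [Nat.choose_zero_right, Nat.cast_one, Real.log_one, Nat.cast_zero, zero_mul,
      sub_zero]
    linarith [log_nat_succ_nonneg n]
  rcases eq_or_lt_of_le hc with he | hlt
  · subst he
    simp only [Nat.choose_self, Nat.cast_one, Real.log_one, sub_self, zero_mul, sub_zero]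
    linarith [log_nat_succ_nonneg c]
  have hn0 : (0 : ℝ) < n := by exact_mod_cast h0.trans hlt
  have hc0 : (0 : ℝ) < c := by exact_mod_cast h0
  have hcn : (c : ℝ) < n := by exact_mod_cast hlt
  set x : ℝ := (c : ℝ) / n with hxdef
  set y : ℝ := ((n : ℝ) - c) / n with hydef
  have hx : 0 < x := by positivity
  have hy : 0 < y := div_pos (sub_pos.mpr hcn) hn0
  have hxy : x + y = 1 := by rw [hxdef, hydef]; field_simp; ring
  have key : (1 : ℝ) ≤ ((n : ℝ) + 1) * ((n.choose c : ℝ) * x ^ c * y ^ (n - c)) := by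
    calc (1 : ℝ) = (x + y) ^ n := by rw [hxy]; simp
      _ = ∑ k ∈ Finset.range (n + 1), x ^ k * y ^ (n - k) * (n.choose k : ℝ) := add_pow x y n
      _ ≤ ∑ k ∈ Finset.range (n + 1), (n.choose c : ℝ) * x ^ c * y ^ (n - c) := by
          apply Finset.sum_le_sum
          intro k hk
          rw [Finset.mem_range, Nat.lt_succ_iff] at hk
          calc x ^ k * y ^ (n - k) * (n.choose k : ℝ)
              = (n.choose k : ℝ) * x ^ k * y ^ (n - k) := by ring
            _ ≤ _ := max_term n c h0 hlt k hk
      _ = ((n : ℝ) + 1) * ((n.choose c : ℝ) * x ^ c * y ^ (n - c)) := by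
          rw [Finset.sum_const, Finset.card_range, nsmul_eq_mul]
          push_cast; ring
  have hchpos : (0 : ℝ) < (n.choose c : ℝ) := by exact_mod_cast Nat.choose_pos hc
  have hterm : (1 : ℝ) / ((n : ℝ) + 1) ≤ (n.choose c : ℝ) * x ^ c * y ^ (n - c) := by
    rw [div_le_iff₀ (by positivity)]
    linarith
  have hlog := Real.log_le_log (by positivity) hterm
  rw [Real.log_div one_ne_zero (by positivity), Real.log_one,
    Real.log_mul (by positivity) (by positivity),
    Real.log_mul hchpos.ne' (by positivity), Real.log_pow, Real.log_pow,
    hxdef, hydef, Real.log_div hc0.ne' hn0.ne', Real.log_div (sub_pos.mpr hcn).ne' hn0.ne']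
    at hlog
  have hcast : ((n - c : ℕ) : ℝ) = (n : ℝ) - c := Nat.cast_sub hc
  rw [hcast] at hlog
  have hlogn1 : Real.log ((n : ℕ) + 1 : ℝ) = Real.log ((n + 1 : ℕ) : ℝ) := by push_cast; ring_nf
  nlinarith [hlog]


lemma μgrid_mem (n c : ℕ) (hn : 0 < n) (hc : c ≤ n) : μgrid n c ∈ Set.Icc (-1 : ℝ) 1 := by
  have hn0 : (0 : ℝ) < n := by exact_mod_cast hn
  have hc' : (c : ℝ) ≤ n := by exact_mod_cast hc
  have hc0 : (0 : ℝ) ≤ c := Nat.cast_nonneg c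
  constructor
  · rw [μgrid, le_div_iff₀ hn0]
    linarith
  · rw [μgrid, div_le_one hn0]
    linarith

lemma entI_negone : entI (-1) = Real.log 2 := by
  rw [entI]; norm_num

lemma entI_one : entI 1 = Real.log 2 := by
  rw [entI]; norm_num

lemma ent_eq (n c : ℕ) (hn : 0 < n) (hc : c ≤ n) :
    (n : ℝ) * (Real.log 2 - entI (μgrid n c)) =
      (n : ℝ) * Real.log n - c * Real.log c - ((n : ℝ) - c) * Real.log ((n : ℝ) - c) := by
  have hn0 : (0 : ℝ) < n := by exact_mod_cast hn
  rcases Nat.eq_zero_or_pos c with hc0 | hc0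
  · subst hc0
    have hμ : μgrid n 0 = -1 := by
      rw [μgrid]; push_cast; rw [mul_zero, zero_sub, neg_div, div_self hn0.ne']
    rw [hμ, entI_negone]
    push_cast
    ring
  rcases eq_or_lt_of_le hc with he | hlt
  · subst he
    have hμ : μgrid c c = 1 := by
      rw [μgrid]
      have : (2 : ℝ) * c - c = c := by ring
      rw [this, div_self hn0.ne']
    rw [hμ, entI_one]
    ring
  · have hc0' : (0 : ℝ) < c := by exact_mod_cast hc0
    have hcn : (c : ℝ) < n := by exact_mod_cast hlt
    have h1 : 1 + μgrid n c = 2 * c / n := by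
      rw [μgrid]; field_simp; ring
    have h2 : 1 - μgrid n c = 2 * ((n : ℝ) - c) / n := by
      rw [μgrid]; field_simp; ring
    rw [entI, h1, h2]
    have e1 : Real.log (2 * (c : ℝ) / n) = Real.log 2 + Real.log c - Real.log n := by
      rw [Real.log_div (mul_pos two_pos hc0').ne' hn0.ne', Real.log_mul two_ne_zero hc0'.ne']
    have e2 : Real.log (2 * ((n : ℝ) - c) / n)
        = Real.log 2 + Real.log ((n : ℝ) - c) - Real.log n := by
      rw [Real.log_div (mul_pos two_pos (sub_pos.mpr hcn)).ne' hn0.ne',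
        Real.log_mul two_ne_zero (sub_pos.mpr hcn).ne']
    rw [e1, e2]
    field_simp
    ring

lemma continuous_entI : Continuous entI := by
  unfold entI
  exact ((Real.continuous_mul_log.comp (continuous_const.add continuous_id)).add
    (Real.continuous_mul_log.comp (continuous_const.sub continuous_id))).div_const 2

lemma continuous_fBip (β J11 J12 J22 h1 h2 a1 a2 : ℝ) :
    Continuous fun μ : ℝ × ℝ => fBip β J11 J12 J22 h1 h2 a1 a2 μ.1 μ.2 := by
  unfold fBip gBip
  apply Continuous.sub
  apply Continuous.sub
  · fun_prop
  · exact continuous_const.mul (continuous_entI.comp continuous_fst)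
  · exact continuous_const.mul (continuous_entI.comp continuous_snd)


lemma Zbip_term_pos (β J11 J12 J22 h1 h2 : ℝ) (N1 N2 : ℕ) :
    0 < Zbip β J11 J12 J22 h1 h2 N1 N2 := by
  unfold Zbip
  apply Finset.sum_pos (fun σ _ => Real.exp_pos _)
  exact Finset.univ_nonempty

lemma choose_le_exp (n c : ℕ) (hn : 0 < n) (hc : c ≤ n) :
    (n.choose c : ℝ) ≤ Real.exp ((n : ℝ) * (Real.log 2 - entI (μgrid n c))) := by
  rw [← Real.exp_log (by exact_mod_cast Nat.choose_pos hc : (0:ℝ) < (n.choose c : ℝ))]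
  apply Real.exp_le_exp.mpr
  rw [ent_eq n c hn hc]
  exact choose_log_le n c hc

lemma exp_le_choose (n c : ℕ) (hn : 0 < n) (hc : c ≤ n) :
    Real.exp ((n : ℝ) * (Real.log 2 - entI (μgrid n c)) - Real.log ((n : ℝ) + 1))
      ≤ (n.choose c : ℝ) := by
  rw [← Real.exp_log (by exact_mod_cast Nat.choose_pos hc : (0:ℝ) < (n.choose c : ℝ))]
  apply Real.exp_le_exp.mpr
  rw [ent_eq n c hn hc]
  exact choose_log_ge n c hc

lemma pressure_bounds (β J11 J12 J22 h1 h2 : ℝ) (p q : ℕ) (hp : 0 < p) (hpq : p < q)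
    (M : ℝ)
    (hub : ∀ μ1 μ2, μ1 ∈ Set.Icc (-1:ℝ) 1 → μ2 ∈ Set.Icc (-1:ℝ) 1 →
      fBip β J11 J12 J22 h1 h2 ((p:ℝ)/q) (1 - (p:ℝ)/q) μ1 μ2 ≤ M)
    (k : ℕ) (hk : 1 ≤ k) (c1 c2 : ℕ) (hc1 : c1 ≤ k * p) (hc2 : c2 ≤ k * (q - p)) :
    (((k*q : ℕ) : ℝ)) * (Real.log 2 + fBip β J11 J12 J22 h1 h2 ((p:ℝ)/q) (1 - (p:ℝ)/q)
        (μgrid (k*p) c1) (μgrid (k*(q-p)) c2))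
      - (Real.log (((k*p : ℕ) : ℝ) + 1) + Real.log (((k*(q-p) : ℕ) : ℝ) + 1))
    ≤ Real.log (Zbip β J11 J12 J22 h1 h2 (k*p) (k*(q-p)))
    ∧ Real.log (Zbip β J11 J12 J22 h1 h2 (k*p) (k*(q-p)))
    ≤ (((k*q : ℕ) : ℝ)) * (Real.log 2 + M)
      + (Real.log (((k*p : ℕ) : ℝ) + 1) + Real.log (((k*(q-p) : ℕ) : ℝ) + 1)) := by
  have hqp : 0 < q - p := by omega
  have hn1 : 0 < k * p := by positivity
  have hn2 : 0 < k * (q - p) := by positivity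
  set n1 := k * p with hn1def
  set n2 := k * (q - p) with hn2def
  have hk0 : ((k:ℕ):ℝ) ≠ 0 := Nat.cast_ne_zero.mpr (by omega)
  have hq0 : ((q:ℕ):ℝ) ≠ 0 := Nat.cast_ne_zero.mpr (by omega)
  have hn1R : (0:ℝ) < (n1 : ℝ) := by exact_mod_cast hn1
  have hn2R : (0:ℝ) < (n2 : ℝ) := by exact_mod_cast hn2
  have hsum : (n1 : ℝ) + (n2 : ℝ) = ((k*q : ℕ) : ℝ) := by
    rw [hn1def, hn2def]
    push_cast [Nat.cast_sub hpq.le]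
    ring
  have ha1 : ((n1 : ℝ)) / ((n1 : ℝ) + (n2 : ℝ)) = (p:ℝ)/q := by
    rw [hsum, hn1def]
    push_cast
    rw [mul_div_mul_left _ _ hk0]
  have ha2 : ((n2 : ℝ)) / ((n1 : ℝ) + (n2 : ℝ)) = 1 - (p:ℝ)/q := by
    rw [hsum, hn2def]
    push_cast [Nat.cast_sub hpq.le]
    field_simp
  have hNpos : (0:ℝ) < ((k*q : ℕ) : ℝ) := by rw [← hsum]; linarith
  have hn1N : (n1 : ℝ) = ((k*q : ℕ) : ℝ) * ((p:ℝ)/q) := by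
    rw [hn1def]; push_cast; field_simp
  have hn2N : (n2 : ℝ) = ((k*q : ℕ) : ℝ) * (1 - (p:ℝ)/q) := by
    rw [hn2def]; push_cast [Nat.cast_sub hpq.le]; field_simp
  -- abbreviations
  set N : ℝ := ((k*q : ℕ) : ℝ) with hNdef
  set F : ℕ → ℕ → ℝ := fun d1 d2 =>
    (n1.choose d1 : ℝ) * (n2.choose d2 : ℝ) *
      Real.exp (β * ((n1 : ℝ) + n2) *
        gBip J11 J12 J22 h1 h2 ((n1 : ℝ) / ((n1 : ℝ) + n2)) ((n2 : ℝ) / ((n1 : ℝ) + n2))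
          (μgrid n1 d1) (μgrid n2 d2)) with hFdef
  have hZ : Zbip β J11 J12 J22 h1 h2 n1 n2
      = ∑ d1 ∈ Finset.range (n1 + 1), ∑ d2 ∈ Finset.range (n2 + 1), F d1 d2 :=
    Zbip_eq β J11 J12 J22 h1 h2 n1 n2
  have hFpos : ∀ d1 d2, d1 ≤ n1 → d2 ≤ n2 → 0 < F d1 d2 := by
    intro d1 d2 hd1 hd2
    apply mul_pos (mul_pos _ _) (Real.exp_pos _)
    · exact_mod_cast Nat.choose_pos hd1
    · exact_mod_cast Nat.choose_pos hd2
  -- the exponent identity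
  have hexp : ∀ d1 d2,
      (n1 : ℝ) * (Real.log 2 - entI (μgrid n1 d1))
        + (n2 : ℝ) * (Real.log 2 - entI (μgrid n2 d2))
        + β * ((n1 : ℝ) + n2) *
          gBip J11 J12 J22 h1 h2 ((n1 : ℝ) / ((n1 : ℝ) + n2)) ((n2 : ℝ) / ((n1 : ℝ) + n2))
            (μgrid n1 d1) (μgrid n2 d2)
      = N * (Real.log 2 + fBip β J11 J12 J22 h1 h2 ((p:ℝ)/q) (1 - (p:ℝ)/q)
          (μgrid n1 d1) (μgrid n2 d2)) := by
    intro d1 d2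
    rw [ha1, ha2, fBip, hsum]
    rw [hn1N, hn2N]
    ring
  -- upper bound on each term
  have hFle : ∀ d1 ∈ Finset.range (n1 + 1), ∀ d2 ∈ Finset.range (n2 + 1),
      F d1 d2 ≤ Real.exp (N * (Real.log 2 + M)) := by
    intro d1 hd1 d2 hd2
    rw [Finset.mem_range, Nat.lt_succ_iff] at hd1 hd2
    have b1 := choose_le_exp n1 d1 hn1 hd1
    have b2 := choose_le_exp n2 d2 hn2 hd2
    have hFle1 : F d1 d2 ≤ Real.exp ((n1 : ℝ) * (Real.log 2 - entI (μgrid n1 d1))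
        + (n2 : ℝ) * (Real.log 2 - entI (μgrid n2 d2))
        + β * ((n1 : ℝ) + n2) *
          gBip J11 J12 J22 h1 h2 ((n1 : ℝ) / ((n1 : ℝ) + n2)) ((n2 : ℝ) / ((n1 : ℝ) + n2))
            (μgrid n1 d1) (μgrid n2 d2)) := by
      rw [Real.exp_add, Real.exp_add]
      apply mul_le_mul _ le_rfl (Real.exp_pos _).le (by positivity)
      apply mul_le_mul b1 b2 (Nat.cast_nonneg _) (Real.exp_pos _).le
    refine hFle1.trans ?_
    rw [hexp d1 d2]
    apply Real.exp_le_exp.mpr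
    apply mul_le_mul_of_nonneg_left _ hNpos.le
    have := hub (μgrid n1 d1) (μgrid n2 d2) (μgrid_mem n1 d1 hn1 hd1) (μgrid_mem n2 d2 hn2 hd2)
    linarith
  have hZpos := Zbip_term_pos β J11 J12 J22 h1 h2 n1 n2
  constructor
  · -- lower bound
    have hFZ : F c1 c2 ≤ Zbip β J11 J12 J22 h1 h2 n1 n2 := by
      rw [hZ]
      calc F c1 c2 ≤ ∑ d2 ∈ Finset.range (n2 + 1), F c1 d2 := by
            apply Finset.single_le_sum (f := fun d2 => F c1 d2)
            · intro d2 hd2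
              rw [Finset.mem_range, Nat.lt_succ_iff] at hd2
              exact (hFpos c1 d2 hc1 hd2).le
            · simp [Nat.lt_succ_iff, hc2]
        _ ≤ ∑ d1 ∈ Finset.range (n1 + 1), ∑ d2 ∈ Finset.range (n2 + 1), F d1 d2 := by
            apply Finset.single_le_sum
              (f := fun d1 => ∑ d2 ∈ Finset.range (n2 + 1), F d1 d2)
            · intro d1 hd1
              rw [Finset.mem_range, Nat.lt_succ_iff] at hd1
              apply Finset.sum_nonneg
              intro d2 hd2
              rw [Finset.mem_range, Nat.lt_succ_iff] at hd2
              exact (hFpos d1 d2 hd1 hd2).le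
            · simp [Nat.lt_succ_iff, hc1]
    have hlogF : Real.log (F c1 c2)
        = Real.log (n1.choose c1 : ℝ) + Real.log (n2.choose c2 : ℝ)
          + β * ((n1 : ℝ) + n2) *
            gBip J11 J12 J22 h1 h2 ((n1 : ℝ) / ((n1 : ℝ) + n2)) ((n2 : ℝ) / ((n1 : ℝ) + n2))
              (μgrid n1 c1) (μgrid n2 c2) := by
      rw [hFdef]
      simp only []
      rw [Real.log_mul (mul_pos (by exact_mod_cast Nat.choose_pos hc1 : (0:ℝ) < (n1.choose c1 : ℝ))
          (by exact_mod_cast Nat.choose_pos hc2 : (0:ℝ) < (n2.choose c2 : ℝ))).ne'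
          (Real.exp_pos _).ne',
        Real.log_mul (by exact_mod_cast (Nat.choose_pos hc1).ne')
          (by exact_mod_cast (Nat.choose_pos hc2).ne'),
        Real.log_exp]
    have hlog1 := choose_log_ge n1 c1 hc1
    have hlog2 := choose_log_ge n2 c2 hc2
    rw [← ent_eq n1 c1 hn1 hc1] at hlog1
    rw [← ent_eq n2 c2 hn2 hc2] at hlog2
    have := Real.log_le_log (hFpos c1 c2 hc1 hc2) hFZ
    have hkey := hexp c1 c2
    rw [hlogF] at this
    linarith
  · -- upper bound
    have hZle : Zbip β J11 J12 J22 h1 h2 n1 n2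
        ≤ ((n1 : ℝ) + 1) * ((n2 : ℝ) + 1) * Real.exp (N * (Real.log 2 + M)) := by
      rw [hZ]
      calc ∑ d1 ∈ Finset.range (n1 + 1), ∑ d2 ∈ Finset.range (n2 + 1), F d1 d2
          ≤ ∑ d1 ∈ Finset.range (n1 + 1), ∑ d2 ∈ Finset.range (n2 + 1),
              Real.exp (N * (Real.log 2 + M)) := by
            apply Finset.sum_le_sum
            intro d1 hd1
            apply Finset.sum_le_sum
            intro d2 hd2
            exact hFle d1 hd1 d2 hd2
        _ = ((n1 : ℝ) + 1) * ((n2 : ℝ) + 1) * Real.exp (N * (Real.log 2 + M)) := by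
            rw [Finset.sum_const, Finset.sum_const, Finset.card_range, Finset.card_range,
              nsmul_eq_mul, nsmul_eq_mul, hn1def, hn2def]
            push_cast
            ring
    have := Real.log_le_log hZpos hZle
    rw [Real.log_mul (by positivity) (Real.exp_pos _).ne',
      Real.log_mul (by positivity) (by positivity), Real.log_exp] at this
    linarith


lemma tendsto_log_lin (a q : ℕ) (ha : 0 < a) (hq : 0 < q) :
    Tendsto (fun k : ℕ => Real.log (((k*a : ℕ) : ℝ) + 1) / ((k*q : ℕ) : ℝ)) atTop (nhds 0) := by
  have hma : Tendsto (fun k : ℕ => ((k*a : ℕ) : ℝ) + 1) atTop atTop := by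
    apply tendsto_atTop_add_const_right
    apply tendsto_natCast_atTop_atTop.comp
    exact tendsto_atTop_mono (fun k => Nat.le_mul_of_pos_right k ha) tendsto_id
  have hmq : Tendsto (fun k : ℕ => ((k*q : ℕ) : ℝ)) atTop atTop := by
    apply tendsto_natCast_atTop_atTop.comp
    exact tendsto_atTop_mono (fun k => Nat.le_mul_of_pos_right k hq) tendsto_id
  have h1 : Tendsto (fun k : ℕ => Real.log (((k*a : ℕ) : ℝ) + 1) / (((k*a : ℕ) : ℝ) + 1))
      atTop (nhds 0) :=
    (Real.isLittleO_log_id_atTop.tendsto_div_nhds_zero).comp hma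
  have h2 : Tendsto (fun k : ℕ => (((k*a : ℕ) : ℝ) + 1) / ((k*q : ℕ) : ℝ))
      atTop (nhds ((a : ℝ)/q + 0)) := by
    have heq : ∀ᶠ k : ℕ in atTop,
        (a : ℝ)/q + 1/((k*q : ℕ) : ℝ) = (((k*a : ℕ) : ℝ) + 1) / ((k*q : ℕ) : ℝ) := by
      filter_upwards [eventually_ge_atTop 1] with k hk
      have hk0 : ((k:ℕ):ℝ) ≠ 0 := Nat.cast_ne_zero.mpr (by omega)
      have hq0 : ((q:ℕ):ℝ) ≠ 0 := Nat.cast_ne_zero.mpr (by omega)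
      push_cast
      field_simp
    apply Tendsto.congr' heq
    apply Tendsto.add tendsto_const_nhds
    have : Tendsto (fun k : ℕ => (((k*q : ℕ) : ℝ))⁻¹) atTop (nhds 0) := hmq.inv_tendsto_atTop
    exact this.congr fun k => (one_div _).symm
  have h3 := h1.mul h2
  rw [zero_mul] at h3
  apply h3.congr
  intro k
  have hne : (((k*a : ℕ) : ℝ) + 1) ≠ 0 := by positivity
  field_simp

lemma tendsto_μgrid (a : ℕ) (ha : 0 < a) (μ x : ℝ) (hx : x = (1 + μ)/2)
    (hμ : μ ∈ Set.Icc (-1 : ℝ) 1) :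
    Tendsto (fun k : ℕ => μgrid (k*a) (⌊x * ((k*a : ℕ) : ℝ)⌋₊)) atTop (nhds μ) := by
  have hx0 : 0 ≤ x := by rw [hx]; linarith [hμ.1]
  have hμx : μ = 2*x - 1 := by rw [hx]; ring
  have hlow : Tendsto (fun k : ℕ => μ - 2/(k : ℝ)) atTop (nhds μ) := by
    have := tendsto_const_nhds (x := μ) (f := atTop (α := ℕ)) |>.sub
      (tendsto_const_div_atTop_nhds_zero_nat 2)
    simpa using this
  apply tendsto_of_tendsto_of_tendsto_of_le_of_le' hlow
    (tendsto_const_nhds (x := μ) (f := atTop (α := ℕ)))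
  · filter_upwards [eventually_ge_atTop 1] with k hk
    have hkR : (1:ℝ) ≤ (k:ℝ) := by exact_mod_cast hk
    have hn : 0 < k * a := by positivity
    have hnR : (0:ℝ) < ((k*a : ℕ) : ℝ) := by exact_mod_cast hn
    have hkn : ((k:ℕ):ℝ) ≤ ((k*a : ℕ) : ℝ) := by
      exact_mod_cast Nat.le_mul_of_pos_right k ha
    have hfl2 : x * ((k*a : ℕ) : ℝ) < (⌊x * ((k*a : ℕ) : ℝ)⌋₊ : ℝ) + 1 :=
      Nat.lt_floor_add_one _
    have h2k : (2:ℝ)/(k:ℝ) * (k:ℝ) = 2 := by field_simp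
    have hdiv : (2:ℝ)/(k:ℝ) * (k:ℝ) ≤ 2/(k:ℝ) * ((k*a : ℕ) : ℝ) :=
      mul_le_mul_of_nonneg_left hkn (by positivity)
    rw [μgrid, le_div_iff₀ hnR, hμx]
    nlinarith [hfl2, hdiv, h2k]
  · filter_upwards [eventually_ge_atTop 1] with k hk
    have hn : 0 < k * a := by positivity
    have hnR : (0:ℝ) < ((k*a : ℕ) : ℝ) := by exact_mod_cast hn
    have hfl : (⌊x * ((k*a : ℕ) : ℝ)⌋₊ : ℝ) ≤ x * ((k*a : ℕ) : ℝ) :=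
      Nat.floor_le (by positivity)
    rw [μgrid, div_le_iff₀ hnR, hμx]
    nlinarith [hfl]

/-- Proposition 1: the thermodynamic limit of the pressure is
log 2 + max over [−1,1]² of the pressure functional f, along the sequence
N = k·q with N₁ = k·p, N₂ = k·(q−p), α₁ = p/q ∈ (0,1). -/
theorem thermodynamic_limit_pressure
    (J11 J12 J22 h1 h2 β : ℝ) (hβ : 0 < β)
    (p q : ℕ) (hp : 0 < p) (hpq : p < q)
    (M : ℝ)
    (hM : IsGreatest ((fun μ : ℝ × ℝ =>
        fBip β J11 J12 J22 h1 h2 ((p : ℝ) / (q : ℝ)) (1 - (p : ℝ) / (q : ℝ)) μ.1 μ.2) ''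
      (Set.Icc (-1 : ℝ) 1 ×ˢ Set.Icc (-1 : ℝ) 1)) M) :
    Tendsto (fun k : ℕ =>
        (1 / ((k * q : ℕ) : ℝ)) *
          Real.log (Zbip β J11 J12 J22 h1 h2 (k * p) (k * (q - p))))
      atTop (nhds (Real.log 2 + M)) := by
  have hq : 0 < q := hp.trans hpq
  have hqp : 0 < q - p := by omega
  obtain ⟨hMmem, hMub⟩ := hM
  obtain ⟨μs, hμmem, hμeq⟩ := hMmem
  rw [Set.mem_prod] at hμmem
  simp only [] at hμeq
  have hub : ∀ μ1 μ2, μ1 ∈ Set.Icc (-1:ℝ) 1 → μ2 ∈ Set.Icc (-1:ℝ) 1 →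
      fBip β J11 J12 J22 h1 h2 ((p:ℝ)/q) (1 - (p:ℝ)/q) μ1 μ2 ≤ M := by
    intro μ1 μ2 hm1 hm2
    exact hMub ⟨(μ1, μ2), Set.mem_prod.mpr ⟨hm1, hm2⟩, rfl⟩
  set x1 : ℝ := (1 + μs.1)/2 with hx1def
  set x2 : ℝ := (1 + μs.2)/2 with hx2def
  set c1 : ℕ → ℕ := fun k => ⌊x1 * ((k*p : ℕ) : ℝ)⌋₊ with hc1def
  set c2 : ℕ → ℕ := fun k => ⌊x2 * ((k*(q-p) : ℕ) : ℝ)⌋₊ with hc2def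
  have hx1le : x1 ≤ 1 := by rw [hx1def]; linarith [hμmem.1.2]
  have hx2le : x2 ≤ 1 := by rw [hx2def]; linarith [hμmem.2.2]
  have hx1ge : 0 ≤ x1 := by rw [hx1def]; linarith [hμmem.1.1]
  have hx2ge : 0 ≤ x2 := by rw [hx2def]; linarith [hμmem.2.1]
  have hc1le : ∀ k, c1 k ≤ k*p := by
    intro k
    rw [hc1def]
    calc ⌊x1 * ((k*p : ℕ) : ℝ)⌋₊ ≤ ⌊((k*p : ℕ) : ℝ)⌋₊ := by
          apply Nat.floor_le_floor
          exact mul_le_of_le_one_left (Nat.cast_nonneg _) hx1le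
      _ = k*p := Nat.floor_natCast _
  have hc2le : ∀ k, c2 k ≤ k*(q-p) := by
    intro k
    rw [hc2def]
    calc ⌊x2 * ((k*(q-p) : ℕ) : ℝ)⌋₊ ≤ ⌊((k*(q-p) : ℕ) : ℝ)⌋₊ := by
          apply Nat.floor_le_floor
          exact mul_le_of_le_one_left (Nat.cast_nonneg _) hx2le
      _ = k*(q-p) := Nat.floor_natCast _
  set G : ℕ → ℝ := fun k => fBip β J11 J12 J22 h1 h2 ((p:ℝ)/q) (1 - (p:ℝ)/q)
      (μgrid (k*p) (c1 k)) (μgrid (k*(q-p)) (c2 k)) with hGdef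
  set E : ℕ → ℝ := fun k =>
      (Real.log (((k*p : ℕ) : ℝ) + 1) + Real.log (((k*(q-p) : ℕ) : ℝ) + 1)) / ((k*q : ℕ) : ℝ)
    with hEdef
  have hE : Tendsto E atTop (nhds 0) := by
    have := (tendsto_log_lin p q hp hq).add (tendsto_log_lin (q-p) q hqp hq)
    rw [add_zero] at this
    apply this.congr
    intro k
    rw [hEdef]
    exact (add_div _ _ _).symm
  have hG : Tendsto G atTop (nhds M) := by
    have hμ1 : Tendsto (fun k : ℕ => μgrid (k*p) (c1 k)) atTop (nhds μs.1) :=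
      tendsto_μgrid p hp μs.1 x1 hx1def hμmem.1
    have hμ2 : Tendsto (fun k : ℕ => μgrid (k*(q-p)) (c2 k)) atTop (nhds μs.2) :=
      tendsto_μgrid (q-p) hqp μs.2 x2 hx2def hμmem.2
    have hpair : Tendsto (fun k : ℕ => (μgrid (k*p) (c1 k), μgrid (k*(q-p)) (c2 k)))
        atTop (nhds (μs.1, μs.2)) := hμ1.prodMk_nhds hμ2
    have hcont := (continuous_fBip β J11 J12 J22 h1 h2 ((p:ℝ)/q) (1 - (p:ℝ)/q)).tendsto
      (μs.1, μs.2)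
    have := hcont.comp hpair
    rw [show fBip β J11 J12 J22 h1 h2 ((p:ℝ)/q) (1 - (p:ℝ)/q) μs.1 μs.2 = M from hμeq] at this
    exact this
  have hlowT : Tendsto (fun k => Real.log 2 + G k - E k) atTop (nhds (Real.log 2 + M)) := by
    have := (tendsto_const_nhds (x := Real.log 2) (f := atTop (α := ℕ))).add hG |>.sub hE
    simpa using this
  have hupT : Tendsto (fun k => Real.log 2 + M + E k) atTop (nhds (Real.log 2 + M)) := by
    have := (tendsto_const_nhds (x := Real.log 2 + M) (f := atTop (α := ℕ))).add hE
    simpa using this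
  apply tendsto_of_tendsto_of_tendsto_of_le_of_le' hlowT hupT
  · filter_upwards [eventually_ge_atTop 1] with k hk
    obtain ⟨hlo, _⟩ := pressure_bounds β J11 J12 J22 h1 h2 p q hp hpq M hub k hk
      (c1 k) (c2 k) (hc1le k) (hc2le k)
    have hN : (0:ℝ) < ((k*q : ℕ) : ℝ) := by
      have : 0 < k*q := by positivity
      exact_mod_cast this
    rw [one_div_mul_eq_div]
    have h2 := (div_le_div_iff_of_pos_right hN).mpr hlo
    have h3 : (((k*q : ℕ) : ℝ) * (Real.log 2 + G k)
        - (Real.log (((k*p : ℕ) : ℝ) + 1) + Real.log (((k*(q-p) : ℕ) : ℝ) + 1))) / ((k*q : ℕ) : ℝ)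
        = Real.log 2 + G k - E k := by
      rw [hEdef]
      field_simp
    rw [h3] at h2
    exact h2
  · filter_upwards [eventually_ge_atTop 1] with k hk
    obtain ⟨_, hup⟩ := pressure_bounds β J11 J12 J22 h1 h2 p q hp hpq M hub k hk
      (c1 k) (c2 k) (hc1le k) (hc2le k)
    have hN : (0:ℝ) < ((k*q : ℕ) : ℝ) := by
      have : 0 < k*q := by positivity
      exact_mod_cast this
    rw [one_div_mul_eq_div]
    have h2 := (div_le_div_iff_of_pos_right hN).mpr hup
    have h3 : (((k*q : ℕ) : ℝ) * (Real.log 2 + M)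
        + (Real.log (((k*p : ℕ) : ℝ) + 1) + Real.log (((k*(q-p) : ℕ) : ℝ) + 1))) / ((k*q : ℕ) : ℝ)
        = Real.log 2 + M + E k := by
      rw [hEdef]
      field_simp
    rw [h3] at h2
    exact h2
end

section
/- (Proposition 2, case 1b) Assume J₁₁ > 0, J₁₂ < 0 and set λ_M = J₁₁ − J₁₂, λ_m = J₁₁ + J₁₂. Suppose either (λ_m < 0 and β > 2/λ_M) or (λ_m > 0 and 2/λ_M < β < 2/λ_m). Then f has exactly three critical points in (−1,1)²: the origin (0,0) and the two points ±(x̃,−x̃), where x̃ is the unique solution in (0,1) of x = tanh((βλ_M/2)·x). The origin is a saddle (inflection) point, while (x̃,−x̃) and (−x̃,x̃) are local maximum points of f. -/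
/-- Pressure functional of the symmetric zero-field bipartite mean-field model
(α₁ = α₂ = 1/2, J₁₁ = J₂₂, h₁ = h₂ = 0). -/
noncomputable def fSym (β J11 J12 : ℝ) (μ : ℝ × ℝ) : ℝ :=
  β / 8 * (J11 * (μ.1 ^ 2 + μ.2 ^ 2) + 2 * J12 * μ.1 * μ.2) - (entI μ.1 + entI μ.2) / 2

/-- A critical point of f: a point of the open square (−1,1)² where both partial
derivatives of f vanish. -/
def IsCritPt (β J11 J12 : ℝ) (μ : ℝ × ℝ) : Prop :=
  μ.1 ∈ Set.Ioo (-1 : ℝ) 1 ∧ μ.2 ∈ Set.Ioo (-1 : ℝ) 1 ∧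
    deriv (fun x => fSym β J11 J12 (x, μ.2)) μ.1 = 0 ∧
    deriv (fun y => fSym β J11 J12 (μ.1, y)) μ.2 = 0


open Real Set

noncomputable def Lf (x : ℝ) : ℝ := (Real.log (1+x) - Real.log (1-x)) / 2

lemma Lf_zero : Lf 0 = 0 := by simp [Lf]

lemma Lf_neg (x : ℝ) : Lf (-x) = - Lf x := by
  unfold Lf
  rw [show (1:ℝ) + -x = 1 - x by ring, show (1:ℝ) - -x = 1 + x by ring]
  ring

lemma hasDerivAt_Lf {x : ℝ} (h1 : -1 < x) (h2 : x < 1) :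
    HasDerivAt Lf (1/(1-x^2)) x := by
  have hp : (0:ℝ) < 1 + x := by linarith
  have hm : (0:ℝ) < 1 - x := by linarith
  have d1 : HasDerivAt (fun y : ℝ => Real.log (1+y)) (1/(1+x)) x := by
    have := (Real.hasDerivAt_log hp.ne').comp x ((hasDerivAt_id x).const_add 1)
    simpa [one_div, Function.comp_def] using this
  have d2 : HasDerivAt (fun y : ℝ => Real.log (1-y)) (-(1/(1-x))) x := by
    have h0 : HasDerivAt (fun y : ℝ => 1 - y) (-1) x := by
      exact (hasDerivAt_id x).const_sub 1
    have := (Real.hasDerivAt_log hm.ne').comp x h0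
    simpa [one_div, Function.comp_def] using this
  have hq : (1:ℝ) - x^2 ≠ 0 := by nlinarith
  have := (d1.sub d2).div_const 2
  refine this.congr_deriv ?_
  field_simp
  ring

lemma hasDerivAt_entI {x : ℝ} (h1 : -1 < x) (h2 : x < 1) :
    HasDerivAt entI (Lf x) x := by
  have hp : (0:ℝ) < 1 + x := by linarith
  have hm : (0:ℝ) < 1 - x := by linarith
  have dp : HasDerivAt (fun y : ℝ => 1 + y) 1 x := by
    simpa using (hasDerivAt_id x).const_add 1
  have dm : HasDerivAt (fun y : ℝ => 1 - y) (-1) x := by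
    exact (hasDerivAt_id x).const_sub 1
  have lp : HasDerivAt (fun y : ℝ => Real.log (1+y)) (1/(1+x)) x := by
    have := (Real.hasDerivAt_log hp.ne').comp x dp
    simpa [one_div, Function.comp_def] using this
  have lm : HasDerivAt (fun y : ℝ => Real.log (1-y)) (-(1/(1-x))) x := by
    have := (Real.hasDerivAt_log hm.ne').comp x dm
    simpa [one_div, Function.comp_def] using this
  have d1 : HasDerivAt (fun y : ℝ => (1+y) * Real.log (1+y))
      (1 * Real.log (1+x) + (1+x) * (1/(1+x))) x := dp.mul lp
  have d2 : HasDerivAt (fun y : ℝ => (1-y) * Real.log (1-y))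
      ((-1) * Real.log (1-x) + (1-x) * (-(1/(1-x)))) x := dm.mul lm
  have := (d1.add d2).div_const 2
  refine this.congr_deriv ?_
  unfold Lf
  field_simp
  ring

/-- tanh in terms of exp -/
lemma tanh_eq_exp (y : ℝ) :
    Real.tanh y = (Real.exp y - Real.exp (-y)) / (Real.exp y + Real.exp (-y)) := by
  have h : Real.exp y + Real.exp (-y) > 0 := by positivity
  rw [Real.tanh_eq_sinh_div_cosh, Real.sinh_eq, Real.cosh_eq]
  field_simp

lemma one_add_tanh (y : ℝ) : 1 + Real.tanh y = 2 * Real.exp y / (Real.exp y + Real.exp (-y)) := by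
  rw [tanh_eq_exp]
  have h : Real.exp y + Real.exp (-y) > 0 := by positivity
  field_simp
  ring

lemma one_sub_tanh (y : ℝ) : 1 - Real.tanh y = 2 * Real.exp (-y) / (Real.exp y + Real.exp (-y)) := by
  rw [tanh_eq_exp]
  have h : Real.exp y + Real.exp (-y) > 0 := by positivity
  field_simp
  ring

lemma tanh_mem_Ioo (y : ℝ) : Real.tanh y ∈ Set.Ioo (-1 : ℝ) 1 := by
  have h : Real.exp y + Real.exp (-y) > 0 := by positivity
  have h1 : 0 < 1 + Real.tanh y := by rw [one_add_tanh]; positivity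
  have h2 : 0 < 1 - Real.tanh y := by rw [one_sub_tanh]; positivity
  constructor <;> linarith

lemma Lf_tanh (y : ℝ) : Lf (Real.tanh y) = y := by
  have h : Real.exp y + Real.exp (-y) > 0 := by positivity
  unfold Lf
  rw [one_add_tanh, one_sub_tanh,
    Real.log_div (by positivity) h.ne', Real.log_div (by positivity) h.ne',
    Real.log_mul (by norm_num) (Real.exp_pos y).ne', Real.log_mul (by norm_num) (Real.exp_pos (-y)).ne',
    Real.log_exp, Real.log_exp]
  ring

lemma tanh_Lf {x : ℝ} (h1 : -1 < x) (h2 : x < 1) : Real.tanh (Lf x) = x := by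
  have hp : (0:ℝ) < 1 + x := by linarith
  have hm : (0:ℝ) < 1 - x := by linarith
  have he : Real.exp (Lf x) ^ 2 = (1+x)/(1-x) := by
    rw [← Real.exp_nat_mul]
    unfold Lf
    rw [show (2:ℕ) * ((Real.log (1+x) - Real.log (1-x))/2) = Real.log (1+x) - Real.log (1-x) by push_cast; ring,
      Real.exp_sub, Real.exp_log hp, Real.exp_log hm]
  have he2 : Real.exp (Lf x)^2 * (1-x) = 1+x := by
    rw [he]; field_simp
  rw [tanh_eq_exp]
  have hx : Real.exp (-Lf x) = (Real.exp (Lf x))⁻¹ := Real.exp_neg _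
  have hepos := Real.exp_pos (Lf x)
  rw [hx]
  field_simp
  ring_nf
  ring_nf at he2
  linarith

lemma entI_zero : entI 0 = 0 := by simp [entI]

lemma entI_neg (x : ℝ) : entI (-x) = entI x := by
  unfold entI
  rw [show (1:ℝ) + -x = 1 - x by ring, show (1:ℝ) - -x = 1 + x by ring]
  ring

lemma entI_eq {x : ℝ} (h1 : -1 < x) (h2 : x < 1) :
    entI x = x * Lf x + Real.log (1 - x^2) / 2 := by
  have hp : (0:ℝ) < 1 + x := by linarith
  have hm : (0:ℝ) < 1 - x := by linarith
  have : (1:ℝ) - x^2 = (1+x)*(1-x) := by ring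
  rw [this, Real.log_mul hp.ne' hm.ne']
  unfold entI Lf
  ring

lemma mono_rho : MonotoneOn (fun x => Lf x - x) (Set.Ioo (-1 : ℝ) 1) := by
  have hd : ∀ x ∈ Set.Ioo (-1 : ℝ) 1, HasDerivAt (fun x => Lf x - x) (1/(1-x^2) - 1) x :=
    fun x hx => (hasDerivAt_Lf hx.1 hx.2).sub (hasDerivAt_id x)
  apply monotoneOn_of_deriv_nonneg (convex_Ioo _ _)
  · exact fun x hx => (hd x hx).differentiableAt.continuousAt.continuousWithinAt
  · rw [interior_Ioo]
    exact fun x hx => (hd x hx).differentiableAt.differentiableWithinAt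
  · rw [interior_Ioo]
    intro x hx
    rw [(hd x hx).deriv]
    have h0 : (0:ℝ) < 1 - x^2 := by nlinarith [hx.1, hx.2]
    have h1 : (1:ℝ) - x^2 ≤ 1 := by nlinarith
    rw [sub_nonneg, le_div_iff₀ h0]
    linarith

lemma self_le_Lf {x : ℝ} (h0 : 0 ≤ x) (h1 : x < 1) : x ≤ Lf x := by
  have := mono_rho (Set.mem_Ioo.mpr ⟨by norm_num, by norm_num⟩)
    (Set.mem_Ioo.mpr ⟨by linarith, h1⟩) h0
  simp only [Lf_zero] at this
  linarith

lemma Lf_lt_frac {x : ℝ} (h0 : 0 < x) (h1 : x < 1) : Lf x < x / (1 - x^2) := by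
  have key : StrictMonoOn (fun x => x / (1-x^2) - Lf x) (Set.Ico (0:ℝ) 1) := by
    have hd : ∀ x ∈ Set.Ioo (-1:ℝ) 1, HasDerivAt (fun x => x / (1-x^2) - Lf x)
        ((1*(1-x^2) - x*(-(2*x)))/(1-x^2)^2 - 1/(1-x^2)) x := by
      intro x hx
      have h0' : (1:ℝ) - x^2 ≠ 0 := by nlinarith [hx.1, hx.2]
      have dq : HasDerivAt (fun x : ℝ => 1 - x^2) (-(2*x)) x := by
        refine ((hasDerivAt_pow 2 x).const_sub 1).congr_deriv ?_; norm_num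
      exact ((hasDerivAt_id x).div dq h0').sub (hasDerivAt_Lf hx.1 hx.2)
    apply strictMonoOn_of_deriv_pos (convex_Ico _ _)
    · intro x hx
      have hx' : x ∈ Set.Ioo (-1:ℝ) 1 := ⟨by linarith [hx.1], hx.2⟩
      exact (hd x hx').differentiableAt.continuousAt.continuousWithinAt
    · rw [interior_Ico]
      intro x hx
      have hx' : x ∈ Set.Ioo (-1:ℝ) 1 := ⟨by linarith [hx.1], hx.2⟩
      rw [(hd x hx').deriv]
      have hq : (0:ℝ) < 1 - x^2 := by nlinarith [hx.1, hx.2]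
      rw [div_sub_div _ _ (by positivity) hq.ne', div_pos_iff]
      left
      constructor
      · nlinarith [mul_pos hq (mul_pos hx.1 hx.1)]
      · positivity
  have := key (Set.mem_Ico.mpr ⟨le_refl 0, by norm_num⟩) (Set.mem_Ico.mpr ⟨h0.le, h1⟩) h0
  simp only [Lf_zero] at this
  norm_num at this
  linarith

lemma Lf_div_strictMono : StrictMonoOn (fun x => Lf x / x) (Set.Ioo (0:ℝ) 1) := by
  apply strictMonoOn_of_deriv_pos (convex_Ioo _ _)
  · intro x hx
    have hd : HasDerivAt (fun x => Lf x / x) ((1/(1-x^2)*x - Lf x * 1)/x^2) x :=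
      (hasDerivAt_Lf (by linarith [hx.1]) hx.2).div (hasDerivAt_id x) (ne_of_gt hx.1)
    exact hd.differentiableAt.continuousAt.continuousWithinAt
  · rw [interior_Ioo]
    intro x hx
    have hd : HasDerivAt (fun x => Lf x / x) ((1/(1-x^2)*x - Lf x * 1)/x^2) x :=
      (hasDerivAt_Lf (by linarith [hx.1]) hx.2).div (hasDerivAt_id x) (ne_of_gt hx.1)
    rw [hd.deriv]
    have hq : (0:ℝ) < 1 - x^2 := by nlinarith [hx.1, hx.2]
    have hlt := Lf_lt_frac hx.1 hx.2
    rw [div_pos_iff]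
    left
    refine ⟨?_, pow_pos hx.1 2⟩
    rw [one_div, inv_mul_eq_div]
    linarith [hlt]

lemma entI_ge_sq {x : ℝ} (h0 : 0 ≤ x) (h1 : x < 1) : x^2/2 ≤ entI x := by
  have hd : ∀ y ∈ Set.Ioo (-1:ℝ) 1, HasDerivAt (fun y => entI y - y^2/2) (Lf y - y) y := by
    intro y hy
    have := (hasDerivAt_entI hy.1 hy.2).sub (((hasDerivAt_pow 2 y)).div_const 2)
    refine this.congr_deriv ?_
    push_cast
    ring
  have key : MonotoneOn (fun y => entI y - y^2/2) (Set.Ico (0:ℝ) 1) := by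
    apply monotoneOn_of_deriv_nonneg (convex_Ico _ _)
    · intro y hy
      have hy' : y ∈ Set.Ioo (-1:ℝ) 1 := ⟨by linarith [hy.1], hy.2⟩
      exact (hd y hy').differentiableAt.continuousAt.continuousWithinAt
    · rw [interior_Ico]
      intro y hy
      have hy' : y ∈ Set.Ioo (-1:ℝ) 1 := ⟨by linarith [hy.1], hy.2⟩
      exact (hd y hy').differentiableAt.differentiableWithinAt
    · rw [interior_Ico]
      intro y hy
      have hy' : y ∈ Set.Ioo (-1:ℝ) 1 := ⟨by linarith [hy.1], hy.2⟩
      rw [(hd y hy').deriv, sub_nonneg]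
      exact self_le_Lf hy.1.le hy.2
  have := key (Set.mem_Ico.mpr ⟨le_refl 0, by norm_num⟩) (Set.mem_Ico.mpr ⟨h0, h1⟩) h0
  simp only [entI_zero] at this
  norm_num at this
  linarith

lemma eventually_Lf_lt {k : ℝ} (hk : 1 < k) : ∀ᶠ t in nhdsWithin (0:ℝ) (Set.Ioi 0), Lf t < k * t := by
  have hd : HasDerivAt (fun t => Lf t - k*t) (1 - k) 0 := by
    have := (hasDerivAt_Lf (by norm_num : (-1:ℝ) < 0) (by norm_num)).sub
      ((hasDerivAt_id 0).const_mul k)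
    norm_num at this
    exact this
  have hslope := hasDerivAt_iff_tendsto_slope.mp hd
  have hev : ∀ᶠ t in nhdsWithin (0:ℝ) {(0:ℝ)}ᶜ, slope (fun t => Lf t - k*t) 0 t < 0 :=
    hslope.eventually_lt_const (by linarith)
  have hev2 : ∀ᶠ t in nhdsWithin (0:ℝ) (Set.Ioi 0), slope (fun t => Lf t - k*t) 0 t < 0 :=
    hev.filter_mono (nhdsWithin_mono 0 (fun x hx => ne_of_gt hx))
  filter_upwards [hev2, self_mem_nhdsWithin] with t hs ht
  simp only [Set.mem_Ioi] at ht
  have hs' : (Lf t - k*t)/t < 0 := by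
    rw [slope_def_field] at hs
    simpa [Lf_zero] using hs
  rcases div_neg_iff.mp hs' with ⟨h1', h2'⟩ | ⟨h1', h2'⟩
  · linarith
  · linarith

lemma fSym_swap (β J11 J12 u v : ℝ) : fSym β J11 J12 (u, v) = fSym β J11 J12 (v, u) := by
  simp only [fSym]; ring

lemma fSym_hasDerivAt_fst (β J11 J12 v : ℝ) {u : ℝ} (h1 : -1 < u) (h2 : u < 1) :
    HasDerivAt (fun x => fSym β J11 J12 (x, v)) (β/4*(J11*u + J12*v) - Lf u / 2) u := by
  have hfun : (fun x => fSym β J11 J12 (x, v))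
      = fun x => β/8*(J11*(x^2 + v^2) + 2*J12*x*v) - (entI x + entI v)/2 := by
    funext x; simp only [fSym]
  rw [hfun]
  have hE := hasDerivAt_entI h1 h2
  have hx2 : HasDerivAt (fun x : ℝ => x^2) (2*u) u := by simpa using hasDerivAt_pow 2 u
  have hP : HasDerivAt (fun x : ℝ => β/8*(J11*(x^2 + v^2) + 2*J12*x*v))
      (β/8*(J11*(2*u) + 2*J12*v)) u := by
    have hid : HasDerivAt (fun x : ℝ => x) 1 u := hasDerivAt_id u
    have := (((hx2.add_const (v^2)).const_mul J11).add
      ((hid.const_mul (2*J12)).mul_const v)).const_mul (β/8)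
    refine this.congr_deriv ?_
    ring
  have := hP.sub ((hE.add_const (entI v)).div_const 2)
  refine this.congr_deriv ?_
  ring

lemma fSym_hasDerivAt_snd (β J11 J12 u : ℝ) {v : ℝ} (h1 : -1 < v) (h2 : v < 1) :
    HasDerivAt (fun y => fSym β J11 J12 (u, y)) (β/4*(J11*v + J12*u) - Lf v / 2) v := by
  have hfun : (fun y => fSym β J11 J12 (u, y)) = fun y => fSym β J11 J12 (y, u) :=
    funext fun y => fSym_swap β J11 J12 u y
  rw [hfun]
  exact fSym_hasDerivAt_fst β J11 J12 u h1 h2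

lemma isCritPt_iff {β J11 J12 u v : ℝ} :
    IsCritPt β J11 J12 (u, v) ↔ u ∈ Set.Ioo (-1:ℝ) 1 ∧ v ∈ Set.Ioo (-1:ℝ) 1 ∧
      Lf u = β/2*(J11*u + J12*v) ∧ Lf v = β/2*(J11*v + J12*u) := by
  constructor
  · rintro ⟨h1, h2, d1, d2⟩
    refine ⟨h1, h2, ?_, ?_⟩
    · have := (fSym_hasDerivAt_fst β J11 J12 v h1.1 h1.2).deriv
      rw [d1] at this
      linarith
    · have := (fSym_hasDerivAt_snd β J11 J12 u h2.1 h2.2).deriv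
      rw [d2] at this
      linarith
  · rintro ⟨h1, h2, e1, e2⟩
    refine ⟨h1, h2, ?_, ?_⟩
    · rw [(fSym_hasDerivAt_fst β J11 J12 v h1.1 h1.2).deriv]
      linarith
    · rw [(fSym_hasDerivAt_snd β J11 J12 u h2.1 h2.2).deriv]
      linarith

lemma sum_eq_neg {u v cm : ℝ} (hu : u ∈ Set.Ioo (-1:ℝ) 1) (hv : v ∈ Set.Ioo (-1:ℝ) 1)
    (hcm : cm < 1) (heq : Lf u + Lf v = cm * (u + v)) : v = -u := by
  have hnv : -v ∈ Set.Ioo (-1:ℝ) 1 := ⟨by linarith [hv.2], by linarith [hv.1]⟩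
  rcases lt_trichotomy (u + v) 0 with h | h | h
  · exfalso
    have hle : u ≤ -v := by linarith
    have := mono_rho hu hnv hle
    simp only [Lf_neg] at this
    nlinarith
  · linarith
  · exfalso
    have hle : -v ≤ u := by linarith
    have := mono_rho hnv hu hle
    simp only [Lf_neg] at this
    nlinarith

lemma exists_xt {c : ℝ} (hc : 1 < c) : ∃ xt ∈ Set.Ioo (0:ℝ) 1, Lf xt = c * xt := by
  set b := Real.tanh c with hbdef
  have hb := tanh_mem_Ioo c
  have hb0 : 0 < b := by
    rw [hbdef, Real.tanh_eq_sinh_div_cosh]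
    exact div_pos (Real.sinh_pos_iff.mpr (by linarith)) (Real.cosh_pos c)
  have hgb : 0 < Lf b - c * b := by
    rw [hbdef, Lf_tanh]
    nlinarith [hb.2]
  have hev : ∀ᶠ t in nhdsWithin (0:ℝ) (Set.Ioi 0), Lf t < c * t ∧ t ∈ Set.Ioo 0 b :=
    (eventually_Lf_lt hc).and (Ioo_mem_nhdsGT_of_mem ⟨le_refl 0, hb0⟩)
  obtain ⟨a, ha1, ha2⟩ := hev.exists
  have ha0 : 0 < a := ha2.1
  have hab : a < b := ha2.2
  have hcont : ContinuousOn (fun x => Lf x - c * x) (Set.Icc a b) := by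
    intro x hx
    have hx1 : -1 < x := by linarith [hx.1]
    have hx2 : x < 1 := lt_of_le_of_lt hx.2 hb.2
    exact ((hasDerivAt_Lf hx1 hx2).sub
      ((hasDerivAt_id x).const_mul c)).differentiableAt.continuousAt.continuousWithinAt
  have hmem : (0:ℝ) ∈ Set.Ioo (Lf a - c * a) (Lf b - c * b) := ⟨by linarith, hgb⟩
  obtain ⟨xt, hxt, hgxt⟩ := intermediate_value_Ioo hab.le hcont hmem
  simp only at hgxt
  exact ⟨xt, ⟨lt_trans ha0 hxt.1, hxt.2.trans hb.2⟩, by linarith⟩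

lemma xt_unique {c y z : ℝ} (hy : y ∈ Set.Ioo (0:ℝ) 1) (hz : z ∈ Set.Ioo (0:ℝ) 1)
    (ey : Lf y = c * y) (ez : Lf z = c * z) : y = z := by
  apply Lf_div_strictMono.injOn hy hz
  simp only
  rw [ey, ez, mul_div_assoc, mul_div_assoc, div_self (ne_of_gt hy.1), div_self (ne_of_gt hz.1)]

lemma G_hasDerivAt {c x : ℝ} (h1 : -1 < x) (h2 : x < 1) :
    HasDerivAt (fun x => c/4*x^2 - entI x/2) ((c*x - Lf x)/2) x := by
  have := ((hasDerivAt_pow 2 x).const_mul (c/4)).sub ((hasDerivAt_entI h1 h2).div_const 2)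
  refine this.congr_deriv ?_
  push_cast
  ring

lemma G_max {c xt : ℝ} (hc : 1 < c) (hxt : xt ∈ Set.Ioo (0:ℝ) 1) (heq : Lf xt = c * xt) :
    ∀ u ∈ Set.Ioo (-1:ℝ) 1, c/4*u^2 - entI u/2 ≤ c/4*xt^2 - entI xt/2 := by
  have hLfc : Lf xt / xt = c := by
    rw [heq, mul_div_assoc, div_self (ne_of_gt hxt.1), mul_one]
  have hmono : MonotoneOn (fun x => c/4*x^2 - entI x/2) (Set.Icc 0 xt) := by
    apply monotoneOn_of_deriv_nonneg (convex_Icc _ _)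
    · intro x hx
      exact (G_hasDerivAt (by linarith [hx.1]) (lt_of_le_of_lt hx.2 hxt.2)).differentiableAt.continuousAt.continuousWithinAt
    · rw [interior_Icc]
      intro x hx
      exact (G_hasDerivAt (by linarith [hx.1]) (lt_trans hx.2 hxt.2)).differentiableAt.differentiableWithinAt
    · rw [interior_Icc]
      intro x hx
      rw [(G_hasDerivAt (by linarith [hx.1]) (lt_trans hx.2 hxt.2)).deriv]
      have hlt : Lf x / x < c := by
        rw [← hLfc]
        exact Lf_div_strictMono ⟨hx.1, lt_trans hx.2 hxt.2⟩ hxt hx.2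
      rw [div_lt_iff₀ hx.1] at hlt
      linarith
  have hanti : AntitoneOn (fun x => c/4*x^2 - entI x/2) (Set.Ico xt 1) := by
    apply antitoneOn_of_deriv_nonpos (convex_Ico _ _)
    · intro x hx
      exact (G_hasDerivAt (by linarith [hxt.1, hx.1]) hx.2).differentiableAt.continuousAt.continuousWithinAt
    · rw [interior_Ico]
      intro x hx
      exact (G_hasDerivAt (by linarith [hxt.1, hx.1]) hx.2).differentiableAt.differentiableWithinAt
    · rw [interior_Ico]
      intro x hx
      rw [(G_hasDerivAt (by linarith [hxt.1, hx.1]) hx.2).deriv]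
      have hlt : c < Lf x / x := by
        rw [← hLfc]
        exact Lf_div_strictMono hxt ⟨lt_trans hxt.1 hx.1, hx.2⟩ hx.1
      rw [lt_div_iff₀ (by linarith [hxt.1, hx.1])] at hlt
      linarith
  have key : ∀ w : ℝ, 0 ≤ w → w < 1 → c/4*w^2 - entI w/2 ≤ c/4*xt^2 - entI xt/2 := by
    intro w hw0 hw1
    rcases le_or_gt w xt with h | h
    · exact hmono ⟨hw0, h⟩ ⟨hxt.1.le, le_refl xt⟩ h
    · exact hanti ⟨le_refl xt, hxt.2⟩ ⟨h.le, hw1⟩ h.le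
  intro u hu
  rcases le_or_gt 0 u with h | h
  · exact key u h hu.2
  · have heven : c/4*u^2 - entI u/2 = c/4*(-u)^2 - entI (-u)/2 := by
      rw [entI_neg]; ring
    rw [heven]
    exact key (-u) (by linarith) (by linarith [hu.1])

lemma not_localMax_origin {β J11 J12 : ℝ} (hc : 1 < β*(J11-J12)/2) :
    ¬ IsLocalMax (fSym β J11 J12) (0, 0) := by
  intro hmax
  have hf0 : fSym β J11 J12 (0,0) = 0 := by simp [fSym, entI]
  have hcont : Continuous (fun t : ℝ => ((t, -t) : ℝ × ℝ)) := by continuity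
  have htend : Filter.Tendsto (fun t : ℝ => ((t, -t) : ℝ × ℝ)) (nhds 0) (nhds ((0:ℝ), (0:ℝ))) := by
    have h := hcont.tendsto 0
    have h2 : ((0:ℝ), -(0:ℝ)) = ((0:ℝ), (0:ℝ)) := by norm_num
    rwa [h2] at h
  have hev : ∀ᶠ t in nhds (0:ℝ), fSym β J11 J12 (t, -t) ≤ 0 := by
    filter_upwards [htend.eventually hmax] with t h
    rwa [hf0] at h
  have hev2 : ∀ᶠ t in nhdsWithin (0:ℝ) (Set.Ioi 0), fSym β J11 J12 (t, -t) ≤ 0 :=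
    hev.filter_mono nhdsWithin_le_nhds
  set c := β*(J11-J12)/2 with hcdef
  have hpos : ∀ᶠ t in nhdsWithin (0:ℝ) (Set.Ioi 0), 0 < fSym β J11 J12 (t, -t) := by
    filter_upwards [eventually_Lf_lt (k := (c+1)/2) (by linarith),
      Ioo_mem_nhdsGT_of_mem (Set.mem_Ico.mpr ⟨le_refl (0:ℝ), one_pos⟩)] with t hLf ht
    have h1 : (-1:ℝ) < t := by linarith [ht.1]
    have h0 : (0:ℝ) < 1 - t^2 := by nlinarith [ht.1, ht.2]
    have hlog : Real.log (1 - t^2) ≤ -t^2 := by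
      have := Real.log_le_sub_one_of_pos h0
      linarith
    have hE : entI t = t * Lf t + Real.log (1-t^2)/2 := entI_eq h1 ht.2
    have hfval : fSym β J11 J12 (t, -t) = c/2*t^2 - entI t := by
      simp only [fSym]
      rw [entI_neg, hcdef]
      ring
    rw [hfval, hE]
    nlinarith [mul_lt_mul_of_pos_left hLf ht.1, hlog]
  obtain ⟨t, h1', h2'⟩ := (hev2.and hpos).exists
  linarith

lemma not_localMin_origin {β J11 J12 : ℝ} (hcm : β*(J11+J12)/2 < 1) :
    ¬ IsLocalMin (fSym β J11 J12) (0, 0) := by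
  intro hmin
  have hf0 : fSym β J11 J12 (0,0) = 0 := by simp [fSym, entI]
  have hcont : Continuous (fun t : ℝ => ((t, t) : ℝ × ℝ)) := by continuity
  have htend : Filter.Tendsto (fun t : ℝ => ((t, t) : ℝ × ℝ)) (nhds 0) (nhds ((0:ℝ), (0:ℝ))) :=
    hcont.tendsto 0
  have hev : ∀ᶠ t in nhds (0:ℝ), 0 ≤ fSym β J11 J12 (t, t) := by
    filter_upwards [htend.eventually hmin] with t h
    rwa [hf0] at h
  have hev2 : ∀ᶠ t in nhdsWithin (0:ℝ) (Set.Ioi 0), 0 ≤ fSym β J11 J12 (t, t) :=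
    hev.filter_mono nhdsWithin_le_nhds
  set cm := β*(J11+J12)/2 with hcmdef
  have hneg : ∀ᶠ t in nhdsWithin (0:ℝ) (Set.Ioi 0), fSym β J11 J12 (t, t) < 0 := by
    filter_upwards [Ioo_mem_nhdsGT_of_mem (Set.mem_Ico.mpr ⟨le_refl (0:ℝ), one_pos⟩)] with t ht
    have hE := entI_ge_sq ht.1.le ht.2
    have hfval : fSym β J11 J12 (t, t) = cm/2*t^2 - entI t := by
      simp only [fSym]
      rw [hcmdef]
      ring
    rw [hfval]
    nlinarith [ht.1, hE, sq_nonneg t, mul_pos ht.1 ht.1]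
  obtain ⟨t, h1', h2'⟩ := (hev2.and hneg).exists
  linarith

/-- Proposition 2, case 1b: for J₁₁ > 0, J₁₂ < 0, with λ_M = J₁₁ − J₁₂, λ_m = J₁₁ + J₁₂,
if (λ_m < 0 and β > 2/λ_M) or (λ_m > 0 and 2/λ_M < β < 2/λ_m), then f has exactly three
critical points: (0,0) (a saddle point) and ±(x̃,−x̃) (local maximum points), where x̃ is
the unique solution in (0,1) of x = tanh((βλ_M/2)x). -/
theorem prop2_case1b (β J11 J12 : ℝ) (hJ11 : 0 < J11) (hJ12 : J12 < 0) (hβ0 : 0 < β)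
    (hcase : (J11 + J12 < 0 ∧ 2 / (J11 - J12) < β) ∨
      (0 < J11 + J12 ∧ 2 / (J11 - J12) < β ∧ β < 2 / (J11 + J12))) :
    ∃ xt : ℝ, xt ∈ Set.Ioo (0 : ℝ) 1 ∧
      xt = Real.tanh (β * (J11 - J12) / 2 * xt) ∧
      (∀ y ∈ Set.Ioo (0 : ℝ) 1, y = Real.tanh (β * (J11 - J12) / 2 * y) → y = xt) ∧
      {μ : ℝ × ℝ | IsCritPt β J11 J12 μ} = {(0, 0), (xt, -xt), (-xt, xt)} ∧
      (¬ IsLocalMax (fSym β J11 J12) (0, 0) ∧ ¬ IsLocalMin (fSym β J11 J12) (0, 0)) ∧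
      IsLocalMax (fSym β J11 J12) (xt, -xt) ∧ IsLocalMax (fSym β J11 J12) (-xt, xt) := by
  have hlM : 0 < J11 - J12 := by linarith
  have hβM : 2 / (J11 - J12) < β := by
    rcases hcase with ⟨_, h⟩ | ⟨_, h, _⟩ <;> exact h
  have hc : 1 < β * (J11 - J12) / 2 := by
    rw [div_lt_iff₀ hlM] at hβM
    linarith
  have hcm : β * (J11 + J12) / 2 < 1 := by
    rcases hcase with ⟨h1, _⟩ | ⟨h1, _, h2⟩
    · nlinarith
    · rw [lt_div_iff₀ h1] at h2
      linarith
  set c := β * (J11 - J12) / 2 with hcdef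
  set cm := β * (J11 + J12) / 2 with hcmdef
  obtain ⟨xt, hxt, hLfxt⟩ := exists_xt hc
  have hxtI : xt ∈ Set.Ioo (-1:ℝ) 1 := ⟨by linarith [hxt.1], hxt.2⟩
  have hnxtI : -xt ∈ Set.Ioo (-1:ℝ) 1 := ⟨by linarith [hxt.2], by linarith [hxt.1]⟩
  refine ⟨xt, hxt, ?_, ?_, ?_, ⟨?_, ?_⟩, ?_, ?_⟩
  · rw [← hLfxt, tanh_Lf hxtI.1 hxtI.2]
  · intro y hy hyeq
    have hLy : Lf y = c * y := by
      calc Lf y = Lf (Real.tanh (c * y)) := by rw [← hyeq]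
      _ = c * y := Lf_tanh _
    exact xt_unique hy hxt hLy hLfxt
  · ext ⟨u, v⟩
    simp only [Set.mem_setOf_eq, Set.mem_insert_iff, Set.mem_singleton_iff, Prod.mk.injEq]
    rw [isCritPt_iff]
    constructor
    · rintro ⟨hu, hv, e1, e2⟩
      have hsum : Lf u + Lf v = cm * (u + v) := by
        rw [e1, e2, hcmdef]; ring
      have hvu : v = -u := sum_eq_neg hu hv hcm hsum
      subst hvu
      have he : Lf u = c * u := by rw [e1, hcdef]; ring
      rcases lt_trichotomy u 0 with h | h | h
      · right; right
        have hnu : -u ∈ Set.Ioo (0:ℝ) 1 := ⟨by linarith, by linarith [hu.1]⟩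
        have he2 : Lf (-u) = c * (-u) := by rw [Lf_neg, he]; ring
        have := xt_unique hnu hxt he2 hLfxt
        constructor <;> linarith
      · left
        constructor <;> linarith
      · right; left
        have := xt_unique ⟨h, hu.2⟩ hxt he hLfxt
        constructor <;> linarith
    · rintro (⟨h1, h2⟩ | ⟨h1, h2⟩ | ⟨h1, h2⟩) <;> subst h1 <;> subst h2
      · exact ⟨⟨by norm_num, by norm_num⟩, ⟨by norm_num, by norm_num⟩,
          by simp [Lf_zero], by simp [Lf_zero]⟩
      · refine ⟨hxtI, hnxtI, ?_, ?_⟩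
        · rw [hLfxt, hcdef]; ring
        · rw [Lf_neg, hLfxt, hcdef]; ring
      · refine ⟨hnxtI, hxtI, ?_, ?_⟩
        · rw [Lf_neg, hLfxt, hcdef]; ring
        · rw [hLfxt, hcdef]; ring
  · exact not_localMax_origin (hcdef ▸ hc)
  · exact not_localMin_origin (hcmdef ▸ hcm)
  · have hnhds : (Set.Ioo (-1:ℝ) 1 ×ˢ Set.Ioo (-1:ℝ) 1) ∈ nhds ((xt, -xt) : ℝ × ℝ) :=
      (isOpen_Ioo.prod isOpen_Ioo).mem_nhds ⟨hxtI, hnxtI⟩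
    have : ∀ᶠ μ in nhds ((xt, -xt) : ℝ × ℝ),
        fSym β J11 J12 μ ≤ fSym β J11 J12 (xt, -xt) := by
      refine Filter.eventually_of_mem hnhds ?_
      rintro ⟨u, v⟩ ⟨hu, hv⟩
      have hdecomp : ∀ a b : ℝ, fSym β J11 J12 (a, b)
          = (c/4*a^2 - entI a/2) + (c/4*b^2 - entI b/2) + β*J12/8*(a+b)^2 := by
        intro a b; simp only [fSym]; rw [hcdef]; ring
      have hGu := G_max hc hxt hLfxt u hu
      have hGv := G_max hc hxt hLfxt v hv
      have hGnxt : (c/4*(-xt:ℝ)^2 - entI (-xt)/2) = c/4*xt^2 - entI xt/2 := by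
        rw [entI_neg]; ring
      have hsq : β*J12/8*(u+v)^2 ≤ 0 :=
        mul_nonpos_iff.mpr (Or.inr ⟨by nlinarith, sq_nonneg _⟩)
      have hz : β*J12/8*(xt + -xt)^2 = 0 := by
        rw [show xt + -xt = (0:ℝ) by ring]
        norm_num
      rw [hdecomp u v, hdecomp xt (-xt), hz, hGnxt]
      linarith
    exact this
  · have hnhds : (Set.Ioo (-1:ℝ) 1 ×ˢ Set.Ioo (-1:ℝ) 1) ∈ nhds ((-xt, xt) : ℝ × ℝ) :=
      (isOpen_Ioo.prod isOpen_Ioo).mem_nhds ⟨hnxtI, hxtI⟩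
    have : ∀ᶠ μ in nhds ((-xt, xt) : ℝ × ℝ),
        fSym β J11 J12 μ ≤ fSym β J11 J12 (-xt, xt) := by
      refine Filter.eventually_of_mem hnhds ?_
      rintro ⟨u, v⟩ ⟨hu, hv⟩
      have hdecomp : ∀ a b : ℝ, fSym β J11 J12 (a, b)
          = (c/4*a^2 - entI a/2) + (c/4*b^2 - entI b/2) + β*J12/8*(a+b)^2 := by
        intro a b; simp only [fSym]; rw [hcdef]; ring
      have hGu := G_max hc hxt hLfxt u hu
      have hGv := G_max hc hxt hLfxt v hv
      have hGnxt : (c/4*(-xt:ℝ)^2 - entI (-xt)/2) = c/4*xt^2 - entI xt/2 := by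
        rw [entI_neg]; ring
      have hsq : β*J12/8*(u+v)^2 ≤ 0 :=
        mul_nonpos_iff.mpr (Or.inr ⟨by nlinarith, sq_nonneg _⟩)
      have hz : β*J12/8*(-xt + xt)^2 = 0 := by
        rw [show -xt + xt = (0:ℝ) by ring]
        norm_num
      rw [hdecomp u v, hdecomp (-xt) xt, hz, hGnxt]
      linarith
    exact this
end
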